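/- Let V be a finite type with Fintype.card V = n and let E : V → V → Prop be a relation with no directed cycles (¬ Relation.TransGen E v v for every v). Suppose every directed path in (V,E) has length at most ℓ (there is no directed path of length ℓ+1). Then the number of edges of (V,E) is at most t(n, ℓ+1), the number of edges of the Turán graph SimpleGraph.turanGraph n (ℓ+1). -/

import Mathlib

/-- A directed path of length `k` in `(V, E)`: a map `p : Fin (k+1) → V` with
`E (p i) (p (i+1))` for all `i < k`. -/
def IsDirPath {V : Type*} (E : V → V → Prop) (k : ℕ) (p : Fin (k + 1) → V) : Prop :=
  ∀ i : Fin k, E (p i.castSucc) (p i.succ)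

/-- A directed path of length `k` from `v` to `w`. -/
def IsDirPathFromTo {V : Type*} (E : V → V → Prop) (k : ℕ) (p : Fin (k + 1) → V)
    (v w : V) : Prop :=
  p 0 = v ∧ p (Fin.last k) = w ∧ IsDirPath E k p

/-- The number of edges of `(V, E)`: the cardinality of the finset of pairs `(u, v)`
with `E u v`. -/
noncomputable def edgeCount {V : Type*} [Fintype V] (E : V → V → Prop) : ℕ :=
  letI := Classical.decPred fun p : V × V => E p.1 p.2
  (Finset.univ.filter fun p : V × V => E p.1 p.2).card

/-- `t(n, r)`: the number of edges of the Turán graph `SimpleGraph.turanGraph n r`. -/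
def turanEdges (n r : ℕ) : ℕ :=
  (SimpleGraph.turanGraph n r).edgeFinset.card

/-- Extend a path ending at `u` by an edge `E u v`. -/
lemma IsDirPath.snoc {V : Type*} {E : V → V → Prop} {k : ℕ} {p : Fin (k + 1) → V} {u v : V}
    (hp : IsDirPath E k p) (hend : p (Fin.last k) = u) (huv : E u v) :
    IsDirPath E (k + 1) (Fin.snoc p v) ∧ (Fin.snoc p v : Fin (k+2) → V) (Fin.last (k+1)) = v := by
  refine ⟨?_, Fin.snoc_last _ _⟩
  intro i
  induction i using Fin.lastCases with
  | last =>
    rw [Fin.succ_last]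
    simp only [Fin.snoc_castSucc, Fin.snoc_last, hend]
    exact huv
  | cast j =>
    rw [Fin.succ_castSucc]
    simp only [Fin.snoc_castSucc]
    exact hp j

theorem dag_edge_bound_turan {V : Type*} [Fintype V] (E : V → V → Prop) (n ℓ : ℕ)
    (hcard : Fintype.card V = n)
    (hacyc : ∀ v : V, ¬Relation.TransGen E v v)
    (hmax : ¬∃ p : Fin (ℓ + 1 + 1) → V, IsDirPath E (ℓ + 1) p) :
    edgeCount E ≤ turanEdges n (ℓ + 1) := by
  classical
  -- height function: length of longest path ending at v (capped at ℓ)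
  set P : V → ℕ → Prop := fun v k => ∃ p : Fin (k + 1) → V, IsDirPath E k p ∧ p (Fin.last k) = v
    with hP
  set h : V → ℕ := fun v => Nat.findGreatest (P v) ℓ with hh
  have hP0 : ∀ v, P v 0 := fun v => ⟨fun _ => v, fun i => i.elim0, rfl⟩
  have hspec : ∀ v, P v (h v) := fun v => Nat.findGreatest_spec (Nat.zero_le _) (hP0 v)
  have hle : ∀ v, h v ≤ ℓ := fun v => Nat.findGreatest_le ℓ
  have key : ∀ u v, E u v → h u < h v := by
    intro u v huv
    obtain ⟨p, hp, hend⟩ := hspec u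
    obtain ⟨hq, hqend⟩ := hp.snoc hend huv
    have hlt : h u + 1 ≤ ℓ := by
      rcases Nat.lt_or_ge (h u) ℓ with hl | hl
      · omega
      · exfalso
        have : h u = ℓ := le_antisymm (hle u) hl
        rw [← this] at hmax
        exact hmax ⟨_, hq⟩
    exact Nat.lt_of_lt_of_le (Nat.lt_succ_self _) (Nat.le_findGreatest hlt ⟨_, hq, hqend⟩)
  -- the symmetrized simple graph
  let G : SimpleGraph V :=
    { Adj := fun u v => E u v ∨ E v u
      symm := ⟨fun u v (hv : E u v ∨ E v u) => hv.symm⟩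
      loopless := ⟨fun v hv => by
        rcases hv with hv | hv <;> exact absurd (key v v hv) (lt_irrefl _)⟩ }
  have hGadj : ∀ u v, G.Adj u v ↔ E u v ∨ E v u := fun _ _ => Iff.rfl
  letI : DecidableRel G.Adj := Classical.decRel _
  -- edgeCount E = #G.edgeFinset
  have hcount : edgeCount E = G.edgeFinset.card := by
    rw [edgeCount]
    apply Finset.card_bij (fun p _ => Sym2.mk p.1 p.2)
    · rintro ⟨a, b⟩ hab
      simp only [Finset.mem_filter] at hab
      simp only [SimpleGraph.mem_edgeFinset, SimpleGraph.mem_edgeSet]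
      exact Or.inl hab.2
    · rintro ⟨a, b⟩ ha ⟨c, d⟩ hc heq
      simp only [Finset.mem_filter] at ha hc
      rw [Sym2.mk_eq_mk_iff] at heq
      rcases heq with heq | heq
      · exact heq
      · simp only [Prod.swap_prod_mk, Prod.mk.injEq] at heq
        obtain ⟨rfl, rfl⟩ := heq
        exact absurd (key _ _ hc.2) (fun hlt => absurd (key _ _ ha.2) (by omega))
    · intro e he
      simp only [SimpleGraph.mem_edgeFinset] at he
      induction e with
      | _ a b =>
        rw [SimpleGraph.mem_edgeSet] at he
        rcases he with he | he
        · exact ⟨(a, b), by simp [he], rfl⟩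
        · exact ⟨(b, a), by simp [he], Sym2.eq_swap⟩
  -- G is (ℓ+1)-colorable hence (ℓ+2)-cliquefree
  have hcol : G.Colorable (ℓ + 1) := by
    refine ⟨SimpleGraph.Coloring.mk (fun v => ⟨h v, Nat.lt_succ_of_le (hle v)⟩) ?_⟩
    intro u v huv
    simp only [ne_eq, Fin.mk.injEq]
    rcases huv with he | he
    · exact Nat.ne_of_lt (key _ _ he)
    · exact Nat.ne_of_gt (key _ _ he)
  have hcf : G.CliqueFree (ℓ + 2) := hcol.cliqueFree (Nat.lt_succ_self _)
  -- move to Fin n and apply Turán maximality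
  let G' := G.overFin hcard
  letI : DecidableRel G'.Adj := Classical.decRel _
  have hcol' : G'.Colorable (ℓ + 1) := by
    refine ⟨SimpleGraph.Coloring.mk
      (fun i => ⟨h ((Fintype.equivFinOfCardEq hcard).symm i), Nat.lt_succ_of_le (hle _)⟩) ?_⟩
    intro a b hab
    simp only [ne_eq, Fin.mk.injEq]
    rcases hab with he | he
    · exact Nat.ne_of_lt (key _ _ he)
    · exact Nat.ne_of_gt (key _ _ he)
  have hcf' : G'.CliqueFree (ℓ + 2) := hcol'.cliqueFree (Nat.lt_succ_self _)
  have hmaxi := (SimpleGraph.isTuranMaximal_turanGraph (n := n) (Nat.succ_pos ℓ)).2 hcf'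
  have hiso := (G.overFinIso hcard).card_edgeFinset_eq
  rw [hcount, turanEdges]
  calc G.edgeFinset.card = (G.overFin hcard).edgeFinset.card := hiso
    _ ≤ _ := hmaxi
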